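/- Let α, γ, δ₁, β₁ ∈ ℂ with γ ≠ 0. Let x₀ ∈ ℂ ∖ {0}, let D′ be a punctured open disk centered at x₀, and let y, z : D′ → ℂ be holomorphic with y nowhere zero, satisfying the P_III system y′ = y²z/2 + δ₁ − y/x and z′ = −y z²/2 + 2γ y + (2/x)(α + β₁/y²) on D′. Suppose z extends holomorphically to x₀ and y is meromorphic at x₀ with a pole at x₀. Then the pole of y at x₀ is simple, z(x₀)² = 4γ, and lim_{x → x₀} (x − x₀)·y(x) = −2/z(x₀). -/

import Mathlib

open Metric Filter Topology

/-- If two functions agree on a punctured neighborhood of `x₀`, their derivatives agree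
on the punctured neighborhood as well. -/
lemma deriv_eventuallyEq_punctured {f h : ℂ → ℂ} {x₀ : ℂ}
    (hfh : ∀ᶠ x in 𝓝[≠] x₀, f x = h x) :
    ∀ᶠ x in 𝓝[≠] x₀, deriv f x = deriv h x := by
  have h1 : ∀ᶠ x in 𝓝 x₀, ∀ᶠ w in 𝓝 x, w ≠ x₀ → f w = h w :=
    (eventually_nhdsWithin_iff.mp hfh).eventually_nhds
  rw [eventually_nhdsWithin_iff]
  filter_upwards [h1] with x hx hxne
  have h2 : ∀ᶠ w in 𝓝 x, w ≠ x₀ := compl_singleton_mem_nhds hxne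
  exact Filter.EventuallyEq.deriv_eq (by filter_upwards [hx, h2] with w hw hwne
                                         exact hw hwne)

/-- At a movable pole `x₀` of `y` (a point where `y` has a pole while `z`
extends holomorphically), the pole of `y` is simple, `z(x₀)² = 4γ`, and the residue of
`y` is `−2/z(x₀)`. -/
theorem movable_pole_of_y (α γ δ₁ β₁ : ℂ) (hγ : γ ≠ 0)
    (x₀ : ℂ) (hx₀ : x₀ ≠ 0) (r : ℝ) (hr : 0 < r)
    (y z : ℂ → ℂ)
    (hy : DifferentiableOn ℂ y (ball x₀ r \ {x₀}))
    (hz : DifferentiableOn ℂ z (ball x₀ r \ {x₀}))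
    (hy0 : ∀ x ∈ ball x₀ r \ {x₀}, y x ≠ 0)
    (hsys1 : ∀ x ∈ ball x₀ r \ {x₀},
      deriv y x = (y x) ^ 2 * z x / 2 + δ₁ - y x / x)
    (hsys2 : ∀ x ∈ ball x₀ r \ {x₀},
      deriv z x = -(y x * (z x) ^ 2) / 2 + 2 * γ * y x
        + (2 / x) * (α + β₁ / (y x) ^ 2))
    (Z : ℂ → ℂ) (hZ : DifferentiableOn ℂ Z (ball x₀ r))
    (hZz : ∀ x ∈ ball x₀ r \ {x₀}, Z x = z x)
    (hy_mer : MeromorphicAt y x₀)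
    (hy_pole : meromorphicOrderAt y x₀ < ((0 : ℤ) : WithTop ℤ)) :
    meromorphicOrderAt y x₀ = ((-1 : ℤ) : WithTop ℤ) ∧
    (Z x₀) ^ 2 = 4 * γ ∧
    Tendsto (fun x => (x - x₀) * y x) (𝓝[≠] x₀) (𝓝 (-2 / Z x₀)) := by
  -- basic setup
  have hopen : IsOpen (ball x₀ r \ {x₀}) := isOpen_ball.sdiff isClosed_singleton
  have hball : ∀ᶠ x in 𝓝[≠] x₀, x ∈ ball x₀ r \ {x₀} := by
    rw [eventually_nhdsWithin_iff]
    filter_upwards [ball_mem_nhds x₀ hr] with x hx hxne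
    exact ⟨hx, hxne⟩
  -- extract the order as an integer n < 0
  obtain ⟨n, hn⟩ : ∃ n : ℤ, meromorphicOrderAt y x₀ = (n : WithTop ℤ) := by
    rcases WithTop.ne_top_iff_exists.mp (ne_top_of_lt hy_pole) with ⟨n, hn⟩
    exact ⟨n, hn.symm⟩
  have hn_neg : n < 0 := by
    rw [hn] at hy_pole
    exact_mod_cast hy_pole
  set k : ℕ := (-n).toNat with hk_def
  have hk : (k : ℤ) = -n := Int.toNat_of_nonneg (by omega)
  have hk1 : 1 ≤ k := by omega
  -- local representation y = (x - x₀)^(-k) * g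
  obtain ⟨g, hg_an, hgx₀, hg_eq⟩ := (meromorphicOrderAt_eq_int_iff (n := n) hy_mer).mp hn
  set c : ℂ := g x₀ with hc_def
  -- (x - x₀)^k * y x = g x eventually
  have hE : ∀ᶠ x in 𝓝[≠] x₀, (x - x₀) ^ k * y x = g x := by
    filter_upwards [hg_eq, self_mem_nhdsWithin] with x hx (hxne : x ≠ x₀)
    have hsub : x - x₀ ≠ 0 := sub_ne_zero.mpr hxne
    rw [hx, smul_eq_mul, ← mul_assoc, ← zpow_natCast (x - x₀) k, ← zpow_add₀ hsub]
    have : (k : ℤ) + n = 0 := by omega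
    rw [this, zpow_zero, one_mul]
  have hgc : Tendsto g (𝓝[≠] x₀) (𝓝 c) :=
    (hg_an.continuousAt.tendsto).mono_left nhdsWithin_le_nhds
  have T1 : Tendsto (fun x => (x - x₀) ^ k * y x) (𝓝[≠] x₀) (𝓝 c) :=
    hgc.congr' (by filter_upwards [hE] with x hx; exact hx.symm)
  -- (x-x₀)^k → 0
  have Tk : Tendsto (fun x : ℂ => (x - x₀) ^ k) (𝓝[≠] x₀) (𝓝 0) := by
    have : Tendsto (fun x : ℂ => (x - x₀) ^ k) (𝓝 x₀) (𝓝 ((x₀ - x₀) ^ k)) :=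
      ((continuous_id.sub continuous_const).pow k).tendsto x₀
    rw [sub_self, zero_pow (by omega)] at this
    exact this.mono_left nhdsWithin_le_nhds
  -- z → Z x₀
  have hZct : ContinuousAt Z x₀ :=
    ((hZ.analyticOnNhd isOpen_ball) x₀ (mem_ball_self hr)).continuousAt
  have Tz : Tendsto z (𝓝[≠] x₀) (𝓝 (Z x₀)) := by
    refine (hZct.tendsto.mono_left nhdsWithin_le_nhds).congr' ?_
    filter_upwards [hball] with x hx
    exact hZz x hx
  -- g ≠ 0 eventually
  have hgne : ∀ᶠ x in 𝓝[≠] x₀, g x ≠ 0 := by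
    filter_upwards [hE, hball, self_mem_nhdsWithin] with x hx hxb (hxne : x ≠ x₀)
    rw [← hx]
    exact mul_ne_zero (pow_ne_zero _ (sub_ne_zero.mpr hxne)) (hy0 x hxb)
  -- β₁ / y² → 0
  have T3 : Tendsto (fun x => β₁ / (y x) ^ 2) (𝓝[≠] x₀) (𝓝 0) := by
    have key : ∀ᶠ x in 𝓝[≠] x₀,
        β₁ / (y x) ^ 2 = β₁ * ((x - x₀) ^ k) ^ 2 / (g x) ^ 2 := by
      filter_upwards [hE, self_mem_nhdsWithin] with x hx (hxne : x ≠ x₀)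
      have hA : (((x - x₀) ^ k : ℂ)) ^ 2 ≠ 0 :=
        pow_ne_zero _ (pow_ne_zero _ (sub_ne_zero.mpr hxne))
      rw [← hx, mul_pow, mul_comm β₁ (((x - x₀) ^ k) ^ 2), mul_div_mul_left _ _ hA]
    have : Tendsto (fun x => β₁ * ((x - x₀) ^ k) ^ 2 / (g x) ^ 2) (𝓝[≠] x₀)
        (𝓝 (β₁ * (0 : ℂ) ^ 2 / c ^ 2)) :=
      (tendsto_const_nhds.mul (Tk.pow 2)).div (hgc.pow 2) (pow_ne_zero _ hgx₀)
    simpa using this.congr' (by filter_upwards [key] with x hx; exact hx.symm)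
  -- 1/x → 1/x₀
  have Tx : Tendsto (fun x : ℂ => 2 / x) (𝓝[≠] x₀) (𝓝 (2 / x₀)) :=
    ((tendsto_const_nhds.div continuousAt_id.tendsto hx₀)).mono_left nhdsWithin_le_nhds
  -- deriv z = deriv Z eventually, and deriv Z is continuous at x₀
  have hzZ : ∀ᶠ x in 𝓝[≠] x₀, z x = Z x := by
    filter_upwards [hball] with x hx; exact (hZz x hx).symm
  have hdz : ∀ᶠ x in 𝓝[≠] x₀, deriv z x = deriv Z x := deriv_eventuallyEq_punctured hzZ
  have hdZct : ContinuousAt (deriv Z) x₀ :=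
    (((hZ.analyticOnNhd isOpen_ball).deriv) x₀ (mem_ball_self hr)).continuousAt
  have T4 : Tendsto (fun x => (x - x₀) ^ k * deriv z x) (𝓝[≠] x₀) (𝓝 0) := by
    have : Tendsto (fun x => (x - x₀) ^ k * deriv Z x) (𝓝[≠] x₀)
        (𝓝 (0 * deriv Z x₀)) :=
      Tk.mul (hdZct.tendsto.mono_left nhdsWithin_le_nhds)
    rw [zero_mul] at this
    exact this.congr' (by filter_upwards [hdz] with x hx; rw [hx])
  -- Equation 2 multiplied by (x-x₀)^k
  have heq2 : ∀ᶠ x in 𝓝[≠] x₀,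
      (x - x₀) ^ k * deriv z x
        = -(((x - x₀) ^ k * y x) * (z x) ^ 2) / 2
          + 2 * γ * ((x - x₀) ^ k * y x)
          + (x - x₀) ^ k * ((2 / x) * (α + β₁ / (y x) ^ 2)) := by
    filter_upwards [hball] with x hx
    rw [hsys2 x hx]; ring
  have TR2 : Tendsto (fun x =>
      -(((x - x₀) ^ k * y x) * (z x) ^ 2) / 2
        + 2 * γ * ((x - x₀) ^ k * y x)
        + (x - x₀) ^ k * ((2 / x) * (α + β₁ / (y x) ^ 2))) (𝓝[≠] x₀)
      (𝓝 (-(c * (Z x₀) ^ 2) / 2 + 2 * γ * c + 0 * ((2 / x₀) * (α + 0)))) := by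
    exact (((T1.mul (Tz.pow 2)).neg.div_const 2).add
      (tendsto_const_nhds.mul T1)).add
      (Tk.mul (Tx.mul (tendsto_const_nhds.add T3)))
  have hc : c ≠ 0 := hgx₀
  have hkey2 : (0 : ℂ) = -(c * (Z x₀) ^ 2) / 2 + 2 * γ * c := by
    have hlim := tendsto_nhds_unique (T4.congr' (by
      filter_upwards [heq2] with x hx; rw [← hx])) TR2
    linear_combination hlim
  have hZ4 : (Z x₀) ^ 2 = 4 * γ := by
    have h2 : c * ((Z x₀) ^ 2 - 4 * γ) = 0 := by linear_combination 2 * hkey2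
    rcases mul_eq_zero.mp h2 with h | h
    · exact absurd h hc
    · linear_combination h
  have hZ0 : Z x₀ ≠ 0 := by
    intro h
    rw [h, zero_pow two_ne_zero] at hZ4
    exact hγ (by linear_combination -hZ4 / 4)
  -- Equation 1 analysis: derivative of (x-x₀)^k * y
  have hD : ∀ᶠ x in 𝓝[≠] x₀,
      (k : ℂ) * (x - x₀) ^ (k - 1) * y x + (x - x₀) ^ k * deriv y x = deriv g x := by
    have hFg : ∀ᶠ x in 𝓝[≠] x₀, deriv (fun x => (x - x₀) ^ k * y x) x = deriv g x :=
      deriv_eventuallyEq_punctured hE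
    filter_upwards [hFg, hball] with x hx hxb
    rw [← hx]
    have hyd : DifferentiableAt ℂ y x := (hy x hxb).differentiableAt (hopen.mem_nhds hxb)
    have hpd : HasDerivAt (fun x : ℂ => (x - x₀) ^ k)
        ((k : ℂ) * (x - x₀) ^ (k - 1) * 1) x :=
      (((hasDerivAt_id x).sub_const x₀)).pow k
    rw [(show HasDerivAt (fun x => (x - x₀) ^ k * y x) _ x from hpd.mul hyd.hasDerivAt).deriv]
    ring
  -- eventual limit of (x-x₀)^(k-1)
  set p : ℂ := if k = 1 then 1 else 0 with hp_def
  have Tp : Tendsto (fun x : ℂ => (x - x₀) ^ (k - 1)) (𝓝[≠] x₀) (𝓝 p) := by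
    have : Tendsto (fun x : ℂ => (x - x₀) ^ (k - 1)) (𝓝 x₀) (𝓝 ((x₀ - x₀) ^ (k - 1))) :=
      ((continuous_id.sub continuous_const).pow _).tendsto x₀
    have hval : ((x₀ - x₀ : ℂ)) ^ (k - 1) = p := by
      rw [sub_self]
      by_cases h : k = 1
      · simp [hp_def, h]
      · rw [hp_def, if_neg h, zero_pow (by omega)]
    rw [hval] at this
    exact this.mono_left nhdsWithin_le_nhds
  have hgd_ct : ContinuousAt (deriv g) x₀ := by
    obtain ⟨s, hs_mem, hs⟩ := hg_an.eventually_analyticAt.exists_mem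
    obtain ⟨u, hus, hu_open, hxu⟩ := _root_.mem_nhds_iff.mp hs_mem
    have : AnalyticOnNhd ℂ g u := fun w hw => hs w (hus hw)
    exact (this.deriv x₀ hxu).continuousAt
  -- (x-x₀)^(2k) * deriv y : limits from the two sides of equation 1
  have TL1 : Tendsto (fun x => (x - x₀) ^ k * ((x - x₀) ^ k * deriv y x)) (𝓝[≠] x₀)
      (𝓝 (0 * deriv g x₀ - (k : ℂ) * p * c)) := by
    have heq : ∀ᶠ x in 𝓝[≠] x₀,
        (x - x₀) ^ k * ((x - x₀) ^ k * deriv y x)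
          = (x - x₀) ^ k * deriv g x - (k : ℂ) * (x - x₀) ^ (k - 1) * g x := by
      filter_upwards [hD, hE] with x hx hxE
      calc (x - x₀) ^ k * ((x - x₀) ^ k * deriv y x)
          = (x - x₀) ^ k * ((k : ℂ) * (x - x₀) ^ (k - 1) * y x + (x - x₀) ^ k * deriv y x)
            - (k : ℂ) * (x - x₀) ^ (k - 1) * ((x - x₀) ^ k * y x) := by ring
        _ = (x - x₀) ^ k * deriv g x - (k : ℂ) * (x - x₀) ^ (k - 1) * g x := by
            rw [hx, hxE]
    refine Tendsto.congr' (by filter_upwards [heq] with x hx; exact hx.symm) ?_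
    exact (Tk.mul (hgd_ct.tendsto.mono_left nhdsWithin_le_nhds)).sub
      ((tendsto_const_nhds.mul Tp).mul hgc)
  have TR1 : Tendsto (fun x => ((x - x₀) ^ k * y x) ^ 2 * z x / 2
      + ((x - x₀) ^ k) ^ 2 * δ₁ - ((x - x₀) ^ k * y x) * ((x - x₀) ^ k) * (1 / x))
      (𝓝[≠] x₀)
      (𝓝 (c ^ 2 * Z x₀ / 2 + (0 : ℂ) ^ 2 * δ₁ - c * 0 * (1 / x₀))) := by
    refine Tendsto.sub (Tendsto.add (((T1.pow 2).mul Tz).div_const 2)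
      ((Tk.pow 2).mul tendsto_const_nhds)) ?_
    exact (T1.mul Tk).mul
      ((tendsto_const_nhds.div continuousAt_id.tendsto hx₀).mono_left nhdsWithin_le_nhds)
  have heq1 : ∀ᶠ x in 𝓝[≠] x₀,
      (x - x₀) ^ k * ((x - x₀) ^ k * deriv y x)
        = ((x - x₀) ^ k * y x) ^ 2 * z x / 2
          + ((x - x₀) ^ k) ^ 2 * δ₁ - ((x - x₀) ^ k * y x) * ((x - x₀) ^ k) * (1 / x) := by
    filter_upwards [hball] with x hx
    rw [hsys1 x hx]; ring
  have hkey1 : -((k : ℂ) * p * c) = c ^ 2 * Z x₀ / 2 := by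
    have hlim := tendsto_nhds_unique TL1 (TR1.congr' (by
      filter_upwards [heq1] with x hx; rw [← hx]))
    linear_combination hlim
  -- k must equal 1
  have hk_eq : k = 1 := by
    by_contra h
    have hp0 : p = 0 := hp_def.trans (if_neg h)
    rw [hp0] at hkey1
    have h2 : c ^ 2 * Z x₀ = 0 := by linear_combination -2 * hkey1
    rcases mul_eq_zero.mp h2 with h1 | h1
    · exact hc (pow_eq_zero_iff two_ne_zero |>.mp h1)
    · exact hZ0 h1
  -- residue value
  have hcval : c = -2 / Z x₀ := by
    have hp1 : p = 1 := hp_def.trans (if_pos hk_eq)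
    rw [hp1, hk_eq] at hkey1
    push_cast at hkey1
    have h2 : c * (c * Z x₀ + 2) = 0 := by linear_combination -2 * hkey1
    rcases mul_eq_zero.mp h2 with h1 | h1
    · exact absurd h1 hc
    · field_simp
      linear_combination h1
  refine ⟨?_, hZ4, ?_⟩
  · rw [hn]
    congr 1
    omega
  · rw [← hcval]
    refine T1.congr' ?_
    filter_upwards with x
    rw [hk_eq, pow_one]
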